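/- Let a be a finite (possibly empty) sequence of positive integers and let ξ = (ξ_i)_{i≥1} have the GEM(a) distribution. Then the series ∑_{i=1}^∞ ξ_i log ξ_i converges absolutely almost surely and, with C(ξ) := 1 + ∑_{i=1}^∞ ξ_i log ξ_i, one has E[|C(ξ)|^p] < ∞ for every real p ≥ 1. -/

import Mathlib

open MeasureTheory ProbabilityTheory
open scoped ENNReal NNReal

/-- The uniform distribution on the unit interval `(0,1)`. -/
noncomputable def unifMeasure : Measure ℝ := volume.restrict (Set.Ioo 0 1)

/-- The Beta distribution with parameters `a`, `b`. -/
noncomputable def betaMeasure (a b : ℝ) : Measure ℝ :=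
  unifMeasure.withDensity fun t =>
    ENNReal.ofReal (t ^ (a - 1) * (1 - t) ^ (b - 1) *
      (Real.Gamma (a + b) / (Real.Gamma a * Real.Gamma b)))

lemma aux_prod_rpow {ι : Type*} (s : Finset ι) (f : ι → ℝ≥0∞) {q : ℝ} (hq : 0 ≤ q) :
    (∏ i ∈ s, f i) ^ q = ∏ i ∈ s, f i ^ q := by
  classical
  induction s using Finset.induction_on with
  | empty => simp
  | insert _ _ h ih =>
      rw [Finset.prod_insert h, Finset.prod_insert h, ENNReal.mul_rpow_of_nonneg _ _ hq, ih]

lemma aux_lintegral_prod {Ω : Type*} [MeasurableSpace Ω] {μ : Measure Ω}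
    [IsProbabilityMeasure μ] (F : ℕ → Ω → ℝ≥0∞) (hmeas : ∀ i, Measurable (F i))
    (hindep : iIndepFun F μ) (n : ℕ) :
    ∫⁻ ω, ∏ j ∈ Finset.range n, F j ω ∂μ = ∏ j ∈ Finset.range n, ∫⁻ ω, F j ω ∂μ := by
  induction n with
  | zero => simp [measure_univ]
  | succ n ih =>
    have hind : IndepFun (∏ j ∈ Finset.range n, F j) (F n) μ :=
      hindep.indepFun_prod_range_succ hmeas n
    have hprodmeas : Measurable (∏ j ∈ Finset.range n, F j) := by
      rw [show (∏ j ∈ Finset.range n, F j) = fun ω => ∏ j ∈ Finset.range n, F j ω from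
        funext fun ω => Finset.prod_apply ω _ _]
      exact Finset.measurable_prod _ fun j _ => hmeas j
    calc ∫⁻ ω, ∏ j ∈ Finset.range (n + 1), F j ω ∂μ
        = ∫⁻ ω, (∏ j ∈ Finset.range n, F j ω) * F n ω ∂μ := by
          simp [Finset.prod_range_succ]
      _ = (∫⁻ ω, ∏ j ∈ Finset.range n, F j ω ∂μ) * ∫⁻ ω, F n ω ∂μ := by
          simpa [Finset.prod_apply] using
            lintegral_mul_eq_lintegral_mul_lintegral_of_indepFun hprodmeas (hmeas n) hind
      _ = ∏ j ∈ Finset.range (n + 1), ∫⁻ ω, F j ω ∂μ := by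
          rw [ih, Finset.prod_range_succ]

lemma aux_abs_mul_log_le {x : ℝ} (hx0 : 0 < x) (hx1 : x ≤ 1) :
    |x * Real.log x| ≤ 2 * Real.sqrt x := by
  have hs : 0 < Real.sqrt x := Real.sqrt_pos.2 hx0
  have hlog : Real.log x ≤ 0 := Real.log_nonpos hx0.le hx1
  have h1 : |x * Real.log x| = x * (-Real.log x) := by
    rw [abs_of_nonpos (mul_nonpos_of_nonneg_of_nonpos hx0.le hlog)]; ring
  have h2 : -Real.log x = 2 * Real.log (Real.sqrt x)⁻¹ := by
    rw [Real.log_inv, Real.log_sqrt hx0.le]; ring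
  have h3 : Real.log (Real.sqrt x)⁻¹ ≤ (Real.sqrt x)⁻¹ := by
    have := Real.log_le_sub_one_of_pos (inv_pos.2 hs)
    linarith
  have h4 : x * (2 * (Real.sqrt x)⁻¹) = 2 * (x / Real.sqrt x) := by ring
  rw [h1, h2]
  calc x * (2 * Real.log (Real.sqrt x)⁻¹) ≤ x * (2 * (Real.sqrt x)⁻¹) := by
        apply mul_le_mul_of_nonneg_left (by linarith) hx0.le
    _ = 2 * Real.sqrt x := by rw [h4, Real.div_sqrt]

/-- For `ξ ~ GEM(a)` with `a` a finite (possibly empty) sequence of positive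
integers, the series `∑ ξ_i log ξ_i` converges absolutely a.s., and for every `p ≥ 1` the
random variable `C(ξ) = 1 + ∑ ξ_i log ξ_i` satisfies `E[|C(ξ)|^p] < ∞`. -/
theorem gem_C_memLp
    {Ω : Type*} [MeasurableSpace Ω] (μ : Measure Ω) [IsProbabilityMeasure μ]
    (k : ℕ) (a : ℕ → ℕ) (ha : ∀ i < k, 0 < a i)
    (ζ : ℕ → Ω → ℝ) (hζmeas : ∀ i, Measurable (ζ i))
    (hζindep : iIndepFun ζ μ)
    (hζlaw : ∀ i < k, Measure.map (ζ i) μ =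
      _root_.betaMeasure (a i) (1 + ∑ j ∈ Finset.Ico (i + 1) k, (a j : ℝ)))
    (hζlaw' : ∀ i, k ≤ i → Measure.map (ζ i) μ = unifMeasure)
    (ξ : ℕ → Ω → ℝ)
    (hξ : ∀ i ω, ξ i ω = ζ i ω * ∏ j ∈ Finset.range i, (1 - ζ j ω)) :
    (∀ᵐ ω ∂μ, Summable fun i => |ξ i ω * Real.log (ξ i ω)|) ∧
    ∀ p : ℝ, 1 ≤ p →
      ∫⁻ ω, ENNReal.ofReal (|1 + ∑' i, ξ i ω * Real.log (ξ i ω)| ^ p) ∂μ < ⊤ := by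
  classical
  set g : ℕ → Ω → ℝ≥0∞ := fun j ω => ENNReal.ofReal (1 - ζ j ω) with hgdef
  have hgmeas : ∀ j, Measurable (g j) := fun j =>
    (measurable_const.sub (hζmeas j)).ennreal_ofReal
  -- a.s. all ζ j lie in (0,1)
  have hζIoo : ∀ᵐ ω ∂μ, ∀ j, ζ j ω ∈ Set.Ioo (0:ℝ) 1 := by
    rw [ae_all_iff]
    intro j
    have hunif : unifMeasure (Set.Ioo (0:ℝ) 1)ᶜ = 0 := by
      rw [unifMeasure, Measure.restrict_apply measurableSet_Ioo.compl]
      simp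
    have hcompl : (Measure.map (ζ j) μ) (Set.Ioo (0:ℝ) 1)ᶜ = 0 := by
      rcases lt_or_ge j k with hj | hj
      · rw [hζlaw j hj]
        exact (withDensity_absolutelyContinuous unifMeasure _) hunif
      · rw [hζlaw' j hj]; exact hunif
    have h0 : μ (ζ j ⁻¹' (Set.Ioo (0:ℝ) 1)ᶜ) = 0 := by
      rw [← Measure.map_apply (hζmeas j) measurableSet_Ioo.compl]; exact hcompl
    rw [ae_iff]
    have hset : {ω | ¬ ζ j ω ∈ Set.Ioo (0:ℝ) 1} = ζ j ⁻¹' (Set.Ioo (0:ℝ) 1)ᶜ := rfl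
    rw [hset]
    exact h0
  -- each factor has lintegral ≤ 1
  have hfac_le_one : ∀ (q : ℝ), 0 ≤ q → ∀ j, ∫⁻ ω, (g j ω) ^ q ∂μ ≤ 1 := by
    intro q hq j
    have hb : ∀ᵐ ω ∂μ, (g j ω) ^ q ≤ 1 := by
      filter_upwards [hζIoo] with ω hω
      refine ENNReal.rpow_le_one ?_ hq
      exact ENNReal.ofReal_le_one.2 (by linarith [(hω j).1])
    calc ∫⁻ ω, (g j ω) ^ q ∂μ ≤ ∫⁻ _, 1 ∂μ := lintegral_mono_ae hb
      _ = 1 := by simp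
  -- uniform factors have explicit value
  have hfac_unif : ∀ (q : ℝ), 0 < q → ∀ j, k ≤ j →
      ∫⁻ ω, (g j ω) ^ q ∂μ = ENNReal.ofReal (1 / (q + 1)) := by
    intro q hq j hj
    have hfm : Measurable fun t : ℝ => (ENNReal.ofReal (1 - t)) ^ q :=
      ((measurable_const.sub measurable_id).ennreal_ofReal).pow_const q
    have hmeasR : Measurable fun t : ℝ => (1 - t) ^ q :=
      (measurable_const.sub measurable_id).pow_const q
    have hbound : ∀ᵐ t ∂(volume.restrict (Set.Ioo (0:ℝ) 1)), ‖(1 - t) ^ q‖ ≤ 1 := by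
      filter_upwards [ae_restrict_mem measurableSet_Ioo] with t ht
      rw [Real.norm_eq_abs, abs_of_nonneg (Real.rpow_nonneg (by linarith [ht.2]) q)]
      exact Real.rpow_le_one (by linarith [ht.2]) (by linarith [ht.1]) hq.le
    have hint : Integrable (fun t : ℝ => (1 - t) ^ q) (volume.restrict (Set.Ioo (0:ℝ) 1)) :=
      ⟨hmeasR.aestronglyMeasurable, HasFiniteIntegral.of_bounded hbound⟩
    have hpos : 0 ≤ᵐ[volume.restrict (Set.Ioo (0:ℝ) 1)] fun t : ℝ => (1 - t) ^ q := by
      filter_upwards [ae_restrict_mem measurableSet_Ioo] with t ht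
      exact Real.rpow_nonneg (by linarith [ht.2]) q
    have hval : (∫ t in Set.Ioo (0:ℝ) 1, (1 - t) ^ q) = 1 / (q + 1) := by
      rw [← integral_Ioc_eq_integral_Ioo,
        ← intervalIntegral.integral_of_le (by norm_num : (0:ℝ) ≤ 1)]
      have hcs : (∫ x in (0:ℝ)..1, (1 - x) ^ q) = ∫ x in (1-(1:ℝ))..(1-(0:ℝ)), x ^ q :=
        intervalIntegral.integral_comp_sub_left (fun t : ℝ => t ^ q) 1
      rw [hcs]
      norm_num
      rw [integral_rpow (Or.inl (by linarith : (-1:ℝ) < q))]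
      rw [Real.one_rpow, Real.zero_rpow (by linarith : q + 1 ≠ 0)]
      ring
    calc ∫⁻ ω, (g j ω) ^ q ∂μ
        = ∫⁻ t, (ENNReal.ofReal (1 - t)) ^ q ∂(Measure.map (ζ j) μ) :=
          (lintegral_map hfm (hζmeas j)).symm
      _ = ∫⁻ t in Set.Ioo (0:ℝ) 1, (ENNReal.ofReal (1 - t)) ^ q ∂volume := by
          rw [hζlaw' j hj]; rfl
      _ = ∫⁻ t in Set.Ioo (0:ℝ) 1, ENNReal.ofReal ((1 - t) ^ q) ∂volume := by
          refine setLIntegral_congr_fun measurableSet_Ioo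
            (fun t ht => ?_)
          rw [ENNReal.ofReal_rpow_of_nonneg (by linarith [ht.2]) hq.le]
      _ = ENNReal.ofReal (∫ t in Set.Ioo (0:ℝ) 1, (1 - t) ^ q) :=
          (ofReal_integral_eq_lintegral_ofReal hint hpos).symm
      _ = ENNReal.ofReal (1 / (q + 1)) := by rw [hval]
  -- key product moment bound
  have hW : ∀ (q : ℝ), 0 < q → ∀ i : ℕ,
      ∫⁻ ω, ∏ j ∈ Finset.range i, (g j ω) ^ q ∂μ ≤ (ENNReal.ofReal (1 / (q + 1))) ^ (i - k) := by
    intro q hq i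
    have hFmeas : ∀ j, Measurable fun ω => (g j ω) ^ q := fun j => (hgmeas j).pow_const q
    have hFindep : iIndepFun
        (fun j ω => (g j ω) ^ q) μ := by
      exact hζindep.comp (fun _ t => (ENNReal.ofReal (1 - t)) ^ q)
        (fun _ => ((measurable_const.sub measurable_id).ennreal_ofReal).pow_const q)
    rw [aux_lintegral_prod _ hFmeas hFindep i]
    set c := ENNReal.ofReal (1 / (q + 1)) with hcdef
    rcases le_or_gt i k with hik | hki
    · rw [Nat.sub_eq_zero_of_le hik, pow_zero]
      exact Finset.prod_le_one (fun _ _ => zero_le) (fun j _ => hfac_le_one q hq.le j)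
    · have hsplit : ∏ j ∈ Finset.range i, (∫⁻ ω, (g j ω) ^ q ∂μ)
          = (∏ j ∈ Finset.range k, ∫⁻ ω, (g j ω) ^ q ∂μ) *
            ∏ j ∈ Finset.Ico k i, ∫⁻ ω, (g j ω) ^ q ∂μ := by
        rw [Finset.range_eq_Ico, Finset.range_eq_Ico]
        exact (Finset.prod_Ico_consecutive _ (Nat.zero_le k) hki.le).symm
      rw [hsplit]
      have h1 : (∏ j ∈ Finset.range k, ∫⁻ ω, (g j ω) ^ q ∂μ) ≤ 1 :=
        Finset.prod_le_one (fun _ _ => zero_le) (fun j _ => hfac_le_one q hq.le j)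
      have h2 : (∏ j ∈ Finset.Ico k i, ∫⁻ ω, (g j ω) ^ q ∂μ) = c ^ (i - k) := by
        rw [Finset.prod_congr rfl (fun j hj => hfac_unif q hq j (Finset.mem_Ico.1 hj).1)]
        rw [Finset.prod_const, Nat.card_Ico]
      calc (∏ j ∈ Finset.range k, ∫⁻ ω, (g j ω) ^ q ∂μ) *
            ∏ j ∈ Finset.Ico k i, ∫⁻ ω, (g j ω) ^ q ∂μ
          ≤ 1 * (c ^ (i - k)) := mul_le_mul' h1 (le_of_eq h2)
        _ = c ^ (i - k) := one_mul _
  -- geometric tail bound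
  have hgeom : ∀ c : ℝ≥0∞, c ≠ 0 → c < 1 →
      (∑' i : ℕ, c ^ (i - k)) ≤ (c⁻¹) ^ k * (1 - c)⁻¹ := by
    intro c hc0 hc1
    have hctop : c ≠ ⊤ := (hc1.trans_le le_top).ne
    have hck : (c⁻¹) ^ k * c ^ k = 1 := by
      rw [← mul_pow, ENNReal.inv_mul_cancel hc0 hctop, one_pow]
    have hle : ∀ i, c ^ (i - k) ≤ (c⁻¹) ^ k * c ^ i := by
      intro i
      rcases le_or_gt k i with h | h
      · refine le_of_eq ?_
        calc c ^ (i - k) = c ^ (i - k) * 1 := (mul_one _).symm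
          _ = (c⁻¹) ^ k * (c ^ (i - k) * c ^ k) := by rw [← hck]; ring
          _ = (c⁻¹) ^ k * c ^ i := by rw [← pow_add, Nat.sub_add_cancel h]
      · rw [Nat.sub_eq_zero_of_le h.le, pow_zero]
        calc (1:ℝ≥0∞) = (c⁻¹) ^ k * c ^ k := hck.symm
          _ ≤ (c⁻¹) ^ k * c ^ i :=
            mul_le_mul' le_rfl (pow_le_pow_of_le_one zero_le hc1.le h.le)
    calc (∑' i : ℕ, c ^ (i - k)) ≤ ∑' i : ℕ, (c⁻¹) ^ k * c ^ i := ENNReal.tsum_le_tsum hle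
      _ = (c⁻¹) ^ k * ∑' i : ℕ, c ^ i := ENNReal.tsum_mul_left
      _ = (c⁻¹) ^ k * (1 - c)⁻¹ := by rw [ENNReal.tsum_geometric]
  have hgeom_ne_top : ∀ c : ℝ≥0∞, c ≠ 0 → c < 1 → (c⁻¹) ^ k * (1 - c)⁻¹ ≠ ⊤ := by
    intro c hc0 hc1
    apply ENNReal.mul_ne_top
    · exact ENNReal.pow_ne_top (ENNReal.inv_ne_top.2 hc0)
    · exact ENNReal.inv_ne_top.2 (by rw [Ne, tsub_eq_zero_iff_le]; exact not_le.2 hc1)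
  -- measurability of ξ and the key random variables
  have hξmeas : ∀ i, Measurable (ξ i) := by
    intro i
    have : ξ i = fun ω => ζ i ω * ∏ j ∈ Finset.range i, (1 - ζ j ω) := funext (hξ i)
    rw [this]
    exact (hζmeas i).mul
      (Finset.measurable_prod _ fun j _ => measurable_const.sub (hζmeas j))
  set D : ℕ → Ω → ℝ≥0∞ := fun i ω => ENNReal.ofReal |ξ i ω * Real.log (ξ i ω)| with hDdef
  have hDmeas : ∀ i, Measurable (D i) := fun i =>
    (((hξmeas i).mul (Real.measurable_log.comp (hξmeas i))).abs).ennreal_ofReal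
  set W : ℕ → Ω → ℝ≥0∞ := fun i ω => ∏ j ∈ Finset.range i, (g j ω) ^ ((2:ℝ)⁻¹) with hWdef
  have hWmeas : ∀ i, Measurable (W i) :=
    fun i => Finset.measurable_prod _ fun j _ => (hgmeas j).pow_const _
  -- pointwise a.e. domination
  have hptwise : ∀ᵐ ω ∂μ, ∀ i, D i ω ≤ 2 * W i ω := by
    filter_upwards [hζIoo] with ω hω i
    have hζi := hω i
    have hprodpos : 0 < ∏ j ∈ Finset.range i, (1 - ζ j ω) :=
      Finset.prod_pos fun j _ => by linarith [(hω j).2]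
    have hprodle : (∏ j ∈ Finset.range i, (1 - ζ j ω)) ≤ 1 :=
      Finset.prod_le_one (fun j _ => by linarith [(hω j).2]) (fun j _ => by linarith [(hω j).1])
    have hx0 : 0 < ξ i ω := by rw [hξ]; exact mul_pos hζi.1 hprodpos
    have hx1 : ξ i ω ≤ 1 := by
      rw [hξ]; exact mul_le_one₀ hζi.2.le hprodpos.le hprodle
    have h1 : D i ω ≤ ENNReal.ofReal (2 * Real.sqrt (ξ i ω)) :=
      ENNReal.ofReal_le_ofReal (aux_abs_mul_log_le hx0 hx1)
    have h2 : ENNReal.ofReal (2 * Real.sqrt (ξ i ω))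
        = 2 * (ENNReal.ofReal (ξ i ω)) ^ ((2:ℝ)⁻¹) := by
      rw [ENNReal.ofReal_mul (by norm_num : (0:ℝ) ≤ 2), Real.sqrt_eq_rpow,
        ← ENNReal.ofReal_rpow_of_nonneg hx0.le (by norm_num : (0:ℝ) ≤ 1/2)]
      norm_num
    have h3 : ENNReal.ofReal (ξ i ω) ≤ ∏ j ∈ Finset.range i, g j ω := by
      rw [hξ]
      calc ENNReal.ofReal (ζ i ω * ∏ j ∈ Finset.range i, (1 - ζ j ω))
          = ENNReal.ofReal (ζ i ω) *
            ENNReal.ofReal (∏ j ∈ Finset.range i, (1 - ζ j ω)) :=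
            ENNReal.ofReal_mul hζi.1.le
        _ ≤ 1 * ∏ j ∈ Finset.range i, g j ω := by
            refine mul_le_mul' (ENNReal.ofReal_le_one.2 hζi.2.le) (le_of_eq ?_)
            exact ENNReal.ofReal_prod_of_nonneg fun j _ => by linarith [(hω j).2]
        _ = ∏ j ∈ Finset.range i, g j ω := one_mul _
    calc D i ω ≤ 2 * (ENNReal.ofReal (ξ i ω)) ^ ((2:ℝ)⁻¹) := h1.trans h2.le
      _ ≤ 2 * (∏ j ∈ Finset.range i, g j ω) ^ ((2:ℝ)⁻¹) :=
          mul_le_mul' le_rfl (ENNReal.rpow_le_rpow h3 (by norm_num))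
      _ = 2 * W i ω := by
          rw [aux_prod_rpow _ _ (by norm_num : (0:ℝ) ≤ (2:ℝ)⁻¹)]
  -- Part 1
  set c₀ : ℝ≥0∞ := ENNReal.ofReal (1 / ((2:ℝ)⁻¹ + 1)) with hc₀def
  have hc₀0 : c₀ ≠ 0 := by
    rw [hc₀def, Ne, ENNReal.ofReal_eq_zero, not_le]; norm_num
  have hc₀1 : c₀ < 1 := by
    rw [hc₀def, ← ENNReal.ofReal_one]
    exact ENNReal.ofReal_lt_ofReal_iff (by norm_num) |>.2 (by norm_num)
  have hDint : ∀ i, ∫⁻ ω, D i ω ∂μ ≤ 2 * c₀ ^ (i - k) := by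
    intro i
    calc ∫⁻ ω, D i ω ∂μ ≤ ∫⁻ ω, 2 * W i ω ∂μ :=
          lintegral_mono_ae (hptwise.mono fun ω h => h i)
      _ = 2 * ∫⁻ ω, W i ω ∂μ := lintegral_const_mul 2 (hWmeas i)
      _ ≤ 2 * c₀ ^ (i - k) := mul_le_mul' le_rfl (hW _ (by norm_num) i)
  have part1 : ∀ᵐ ω ∂μ, Summable fun i => |ξ i ω * Real.log (ξ i ω)| := by
    have hsum : ∫⁻ ω, ∑' i, D i ω ∂μ < ⊤ := by
      rw [lintegral_tsum fun i => (hDmeas i).aemeasurable]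
      calc (∑' i, ∫⁻ ω, D i ω ∂μ) ≤ ∑' i, 2 * c₀ ^ (i - k) := ENNReal.tsum_le_tsum hDint
        _ = 2 * ∑' i, c₀ ^ (i - k) := ENNReal.tsum_mul_left
        _ ≤ 2 * ((c₀⁻¹) ^ k * (1 - c₀)⁻¹) := mul_le_mul' le_rfl (hgeom c₀ hc₀0 hc₀1)
        _ < ⊤ := ENNReal.mul_lt_top (by norm_num)
            (lt_top_iff_ne_top.2 (hgeom_ne_top c₀ hc₀0 hc₀1))
    have hae : ∀ᵐ ω ∂μ, (∑' i, D i ω) < ⊤ :=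
      ae_lt_top (Measurable.ennreal_tsum fun i => hDmeas i) hsum.ne
    filter_upwards [hae] with ω hω
    have h := ENNReal.summable_toReal hω.ne
    refine Summable.congr h fun i => ?_
    simp [hDdef, ENNReal.toReal_ofReal (abs_nonneg _)]
  refine ⟨part1, ?_⟩
  intro p hp
  have hp0 : (0:ℝ) < p := by linarith
  -- constants
  set q : ℝ := p / 2 with hqdef
  have hq : 0 < q := by rw [hqdef]; linarith
  set c : ℝ≥0∞ := ENNReal.ofReal (1 / (q + 1)) with hcdef
  have hc0 : c ≠ 0 := by
    rw [hcdef, Ne, ENNReal.ofReal_eq_zero, not_le]; positivity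
  have hc1 : c < 1 := by
    rw [hcdef, ← ENNReal.ofReal_one]
    refine ENNReal.ofReal_lt_ofReal_iff (by norm_num) |>.2 ?_
    rw [div_lt_one (by linarith)]; linarith
  set r : ℝ≥0∞ := c ^ (1 / p) with hrdef
  have hr0 : r ≠ 0 := by
    rw [hrdef]
    exact (ENNReal.rpow_pos (pos_iff_ne_zero.2 hc0) (hc1.trans_le le_top).ne).ne'
  have hr1 : r < 1 := by rw [hrdef]; exact ENNReal.rpow_lt_one hc1 (by positivity)
  -- (W i)^p = product with exponent q
  have hWp : ∀ i ω, (W i ω) ^ p = ∏ j ∈ Finset.range i, (g j ω) ^ q := by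
    intro i ω
    rw [hWdef]
    simp only
    rw [← aux_prod_rpow _ _ (by norm_num : (0:ℝ) ≤ (2:ℝ)⁻¹), ← ENNReal.rpow_mul]
    rw [aux_prod_rpow _ _ (by positivity : (0:ℝ) ≤ (2:ℝ)⁻¹ * p)]
    refine Finset.prod_congr rfl fun j _ => ?_
    congr 1
    rw [hqdef]; ring
  -- Lp bound for each D i
  have hE : ∀ i, (∫⁻ ω, (2 * W i ω) ^ p ∂μ) ^ (1 / p) ≤ 2 * r ^ (i - k) := by
    intro i
    have h1 : ∫⁻ ω, (2 * W i ω) ^ p ∂μ = 2 ^ p * ∫⁻ ω, (W i ω) ^ p ∂μ := by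
      rw [← lintegral_const_mul (2 ^ p) ((hWmeas i).pow_const p)]
      refine lintegral_congr fun ω => ?_
      rw [ENNReal.mul_rpow_of_nonneg _ _ hp0.le]
    have h2 : ∫⁻ ω, (W i ω) ^ p ∂μ ≤ c ^ (i - k) := by
      have := hW q hq i
      rw [← hcdef] at this
      calc ∫⁻ ω, (W i ω) ^ p ∂μ = ∫⁻ ω, ∏ j ∈ Finset.range i, (g j ω) ^ q ∂μ :=
            lintegral_congr fun ω => hWp i ω
        _ ≤ c ^ (i - k) := this
    calc (∫⁻ ω, (2 * W i ω) ^ p ∂μ) ^ (1 / p)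
        = (2 ^ p * ∫⁻ ω, (W i ω) ^ p ∂μ) ^ (1 / p) := by rw [h1]
      _ ≤ (2 ^ p * c ^ (i - k)) ^ (1 / p) :=
          ENNReal.rpow_le_rpow (mul_le_mul' le_rfl h2) (by positivity)
      _ = 2 * r ^ (i - k) := by
          rw [ENNReal.mul_rpow_of_nonneg _ _ (by positivity : (0:ℝ) ≤ 1 / p)]
          congr 1
          · rw [← ENNReal.rpow_mul, mul_one_div, div_self hp0.ne', ENNReal.rpow_one]
          · rw [hrdef, ← ENNReal.rpow_natCast c (i - k), ← ENNReal.rpow_mul,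
              ← ENNReal.rpow_natCast (c ^ (1/p)) (i - k), ← ENNReal.rpow_mul]
            congr 1
            ring
  -- finite-sum Minkowski
  have hSmeas : ∀ n, Measurable fun ω => (1:ℝ≥0∞) + ∑ i ∈ Finset.range n, 2 * W i ω :=
    fun n => measurable_const.add
      (Finset.measurable_sum _ fun i _ => (measurable_const.mul (hWmeas i)))
  have hMink : ∀ n, (∫⁻ ω, ((1:ℝ≥0∞) + ∑ i ∈ Finset.range n, 2 * W i ω) ^ p ∂μ) ^ (1 / p)
      ≤ 1 + ∑ i ∈ Finset.range n, 2 * r ^ (i - k) := by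
    intro n
    induction n with
    | zero =>
        simp only [Finset.range_zero, Finset.sum_empty, add_zero, ENNReal.one_rpow]
        rw [lintegral_one, measure_univ, ENNReal.one_rpow]
    | succ n ihn =>
        have hstep := ENNReal.lintegral_Lp_add_le (μ := μ)
          (f := fun ω => (1:ℝ≥0∞) + ∑ i ∈ Finset.range n, 2 * W i ω)
          (g := fun ω => 2 * W n ω)
          (hSmeas n).aemeasurable ((measurable_const.mul (hWmeas n))).aemeasurable hp
        have heq : ∀ ω, (1:ℝ≥0∞) + ∑ i ∈ Finset.range (n+1), 2 * W i ω
            = ((1:ℝ≥0∞) + ∑ i ∈ Finset.range n, 2 * W i ω) + 2 * W n ω := by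
          intro ω
          rw [Finset.sum_range_succ, add_assoc]
        calc (∫⁻ ω, ((1:ℝ≥0∞) + ∑ i ∈ Finset.range (n+1), 2 * W i ω) ^ p ∂μ) ^ (1 / p)
            = (∫⁻ ω, (((1:ℝ≥0∞) + ∑ i ∈ Finset.range n, 2 * W i ω) + 2 * W n ω) ^ p ∂μ)
              ^ (1 / p) := by
              congr 1
              exact lintegral_congr fun ω => by rw [heq ω]
          _ ≤ (∫⁻ ω, ((1:ℝ≥0∞) + ∑ i ∈ Finset.range n, 2 * W i ω) ^ p ∂μ) ^ (1 / p)
              + (∫⁻ ω, (2 * W n ω) ^ p ∂μ) ^ (1 / p) := hstep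
          _ ≤ (1 + ∑ i ∈ Finset.range n, 2 * r ^ (i - k)) + 2 * r ^ (n - k) :=
              add_le_add ihn (hE n)
          _ = 1 + ∑ i ∈ Finset.range (n+1), 2 * r ^ (i - k) := by
              rw [Finset.sum_range_succ, add_assoc]
  -- uniform bound B
  set B : ℝ≥0∞ := 1 + 2 * ((r⁻¹) ^ k * (1 - r)⁻¹) with hBdef
  have hBne : B ≠ ⊤ := by
    rw [hBdef]
    exact ENNReal.add_ne_top.2 ⟨ENNReal.one_ne_top,
      ENNReal.mul_ne_top (by norm_num) (hgeom_ne_top r hr0 hr1)⟩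
  have hboundn : ∀ n, ∫⁻ ω, ((1:ℝ≥0∞) + ∑ i ∈ Finset.range n, 2 * W i ω) ^ p ∂μ ≤ B ^ p := by
    intro n
    have h1 : (∫⁻ ω, ((1:ℝ≥0∞) + ∑ i ∈ Finset.range n, 2 * W i ω) ^ p ∂μ) ^ (1 / p) ≤ B := by
      refine (hMink n).trans ?_
      rw [hBdef]
      refine add_le_add le_rfl ?_
      calc (∑ i ∈ Finset.range n, 2 * r ^ (i - k)) ≤ ∑' i : ℕ, 2 * r ^ (i - k) :=
            ENNReal.sum_le_tsum _
        _ = 2 * ∑' i : ℕ, r ^ (i - k) := ENNReal.tsum_mul_left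
        _ ≤ 2 * ((r⁻¹) ^ k * (1 - r)⁻¹) := mul_le_mul' le_rfl (hgeom r hr0 hr1)
    have h2 := ENNReal.rpow_le_rpow h1 hp0.le
    rwa [← ENNReal.rpow_mul, one_div_mul_cancel hp0.ne', ENNReal.rpow_one] at h2
  -- monotone convergence
  have hmono : Monotone fun n => fun ω =>
      ((1:ℝ≥0∞) + ∑ i ∈ Finset.range n, 2 * W i ω) ^ p := by
    intro m n hmn
    intro ω
    refine ENNReal.rpow_le_rpow (add_le_add le_rfl ?_) hp0.le
    exact Finset.sum_le_sum_of_subset (Finset.range_subset_range.2 hmn)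
  have hlim : ∀ ω, (⨆ n, ((1:ℝ≥0∞) + ∑ i ∈ Finset.range n, 2 * W i ω) ^ p)
      = ((1:ℝ≥0∞) + ∑' i, 2 * W i ω) ^ p := by
    intro ω
    have h1 : Filter.Tendsto (fun n => (1:ℝ≥0∞) + ∑ i ∈ Finset.range n, 2 * W i ω)
        Filter.atTop (nhds (1 + ∑' i, 2 * W i ω)) :=
      Filter.Tendsto.const_add 1 (ENNReal.tendsto_nat_tsum _)
    have h2 : Filter.Tendsto (fun n => ((1:ℝ≥0∞) + ∑ i ∈ Finset.range n, 2 * W i ω) ^ p)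
        Filter.atTop (nhds ((1 + ∑' i, 2 * W i ω) ^ p)) :=
      (ENNReal.continuous_rpow_const.tendsto _).comp h1
    have h3 : Filter.Tendsto (fun n => ((1:ℝ≥0∞) + ∑ i ∈ Finset.range n, 2 * W i ω) ^ p)
        Filter.atTop (nhds (⨆ n, ((1:ℝ≥0∞) + ∑ i ∈ Finset.range n, 2 * W i ω) ^ p)) :=
      tendsto_atTop_iSup fun m n hmn => hmono hmn ω
    exact tendsto_nhds_unique h3 h2
  have hintlim : ∫⁻ ω, ((1:ℝ≥0∞) + ∑' i, 2 * W i ω) ^ p ∂μ ≤ B ^ p := by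
    have := lintegral_iSup (μ := μ) (f := fun n ω =>
        ((1:ℝ≥0∞) + ∑ i ∈ Finset.range n, 2 * W i ω) ^ p)
      (fun n => (hSmeas n).pow_const p) hmono
    calc ∫⁻ ω, ((1:ℝ≥0∞) + ∑' i, 2 * W i ω) ^ p ∂μ
        = ∫⁻ ω, ⨆ n, ((1:ℝ≥0∞) + ∑ i ∈ Finset.range n, 2 * W i ω) ^ p ∂μ :=
          lintegral_congr fun ω => (hlim ω).symm
      _ = ⨆ n, ∫⁻ ω, ((1:ℝ≥0∞) + ∑ i ∈ Finset.range n, 2 * W i ω) ^ p ∂μ := this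
      _ ≤ B ^ p := iSup_le hboundn
  -- final comparison
  have hfinal : ∀ᵐ ω ∂μ, ENNReal.ofReal (|1 + ∑' i, ξ i ω * Real.log (ξ i ω)| ^ p)
      ≤ ((1:ℝ≥0∞) + ∑' i, 2 * W i ω) ^ p := by
    filter_upwards [part1, hptwise] with ω hsummable hdom
    have habs : |1 + ∑' i, ξ i ω * Real.log (ξ i ω)|
        ≤ 1 + ∑' i, |ξ i ω * Real.log (ξ i ω)| := by
      calc |1 + ∑' i, ξ i ω * Real.log (ξ i ω)|
          ≤ |(1:ℝ)| + |∑' i, ξ i ω * Real.log (ξ i ω)| := abs_add_le _ _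
        _ ≤ 1 + ∑' i, |ξ i ω * Real.log (ξ i ω)| := by
            rw [abs_one]
            refine add_le_add le_rfl ?_
            have h := norm_tsum_le_tsum_norm (f := fun i => ξ i ω * Real.log (ξ i ω))
              (by simpa only [Real.norm_eq_abs] using hsummable)
            simpa only [Real.norm_eq_abs] using h
    have hofreal : ENNReal.ofReal (|1 + ∑' i, ξ i ω * Real.log (ξ i ω)|)
        ≤ (1:ℝ≥0∞) + ∑' i, 2 * W i ω := by
      calc ENNReal.ofReal (|1 + ∑' i, ξ i ω * Real.log (ξ i ω)|)
          ≤ ENNReal.ofReal (1 + ∑' i, |ξ i ω * Real.log (ξ i ω)|) :=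
            ENNReal.ofReal_le_ofReal habs
        _ = 1 + ENNReal.ofReal (∑' i, |ξ i ω * Real.log (ξ i ω)|) := by
            rw [ENNReal.ofReal_add (by norm_num) (tsum_nonneg fun i => abs_nonneg _),
              ENNReal.ofReal_one]
        _ = 1 + ∑' i, D i ω := by
            rw [ENNReal.ofReal_tsum_of_nonneg (fun i => abs_nonneg _) hsummable]
        _ ≤ 1 + ∑' i, 2 * W i ω :=
            add_le_add le_rfl (ENNReal.tsum_le_tsum fun i => hdom i)
    calc ENNReal.ofReal (|1 + ∑' i, ξ i ω * Real.log (ξ i ω)| ^ p)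
        = (ENNReal.ofReal |1 + ∑' i, ξ i ω * Real.log (ξ i ω)|) ^ p := by
          rw [ENNReal.ofReal_rpow_of_nonneg (abs_nonneg _) hp0.le]
      _ ≤ ((1:ℝ≥0∞) + ∑' i, 2 * W i ω) ^ p := ENNReal.rpow_le_rpow hofreal hp0.le
  calc ∫⁻ ω, ENNReal.ofReal (|1 + ∑' i, ξ i ω * Real.log (ξ i ω)| ^ p) ∂μ
      ≤ ∫⁻ ω, ((1:ℝ≥0∞) + ∑' i, 2 * W i ω) ^ p ∂μ := lintegral_mono_ae hfinal
    _ ≤ B ^ p := hintlim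
    _ < ⊤ := ENNReal.rpow_lt_top_of_nonneg hp0.le hBne
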